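/- Let G be a finite connected simple graph on vertex set V with |V| ≥ 2, let V₀ ⊆ V be nonempty, let g : V₀ → ℝ, let p ∈ (0,1) and q = 1 − p. Set m = min_{x∈V₀} g(x) and M = max_{x∈V₀} g(x). Let (u_n) be the iteration started from below (u₀ = g on V₀ and u₀ = m off V₀) and (v_n) the iteration started from above (v₀ = g on V₀ and v₀ = M off V₀), where in both cases w_{n+1}(x) = g(x) for x ∈ V₀ and w_{n+1}(x) = p·max_{y∼x} w_n(y) + q·min_{y∼x} w_n(y) for x ∈ V∖V₀. If w : V → ℝ is any solution of the r-biased infinity Laplacian boundary problem, then u_n(x) ≤ w(x) ≤ v_n(x) for every n ≥ 0 and every x ∈ V; i.e., at each step the two iterations give lower and upper bounds for any solution. -/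
import Mathlib


/-- In a connected graph with at least two vertices every vertex has a neighbor. -/
lemma neighborFinset_nonempty_of_connected {V : Type*} [Fintype V]
    (G : SimpleGraph V) [DecidableRel G.Adj]
    (hc : G.Connected) (h2 : 1 < Fintype.card V) (x : V) :
    (G.neighborFinset x).Nonempty := by
  obtain ⟨y, hy⟩ := Fintype.exists_ne_of_one_lt_card h2 x
  obtain ⟨w⟩ := hc.preconnected x y
  cases w with
  | nil => exact absurd rfl hy
  | cons h _ => exact ⟨_, (G.mem_neighborFinset x _).mpr h⟩

lemma aux_min_principle {V : Type*} [Fintype V] [DecidableEq V]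
    (G : SimpleGraph V) [DecidableRel G.Adj]
    (hcard : 1 < Fintype.card V) (hconn : G.Connected)
    (V₀ : Finset V) (hV₀ : V₀.Nonempty)
    (p q : ℝ) (hp : 0 < p) (hq : 0 < q) (hpq : p + q = 1)
    (w : V → ℝ)
    (hw : ∀ x ∉ V₀, w x =
      p * (G.neighborFinset x).sup'
            (neighborFinset_nonempty_of_connected G hconn hcard x) w
        + q * (G.neighborFinset x).inf'
            (neighborFinset_nonempty_of_connected G hconn hcard x) w) :
    ∃ z ∈ V₀, ∀ x, w z ≤ w x := by
  have hne : Nonempty V := Fintype.card_pos_iff.mp (by omega)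
  obtain ⟨x₀, -, hx₀⟩ := Finset.exists_min_image Finset.univ w Finset.univ_nonempty
  set c := w x₀ with hc
  have hcle : ∀ y, c ≤ w y := fun y => hx₀ y (Finset.mem_univ y)
  have key : ∀ x, w x = c → x ∉ V₀ → ∀ y ∈ G.neighborFinset x, w y = c := by
    intro x hx hxV y hy
    set ne := neighborFinset_nonempty_of_connected G hconn hcard x
    set S := (G.neighborFinset x).sup' ne w with hS
    set I := (G.neighborFinset x).inf' ne w with hI
    have hIc : c ≤ I := Finset.le_inf' ne w (fun b _ => hcle b)
    have hSc : c ≤ S := le_trans (hcle _) (Finset.le_sup' w hy)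
    have hweq : c = p * S + q * I := by rw [← hx]; exact hw x hxV
    have h1 : p * S ≤ p * c := by
      have h2 := mul_le_mul_of_nonneg_left hIc hq.le
      have h3 : p * c + q * c = c := by rw [← add_mul, hpq, one_mul]
      linarith
    have hSle : S ≤ c := le_of_mul_le_mul_left h1 hp
    have : w y ≤ c := le_trans (Finset.le_sup' w hy) hSle
    linarith [hcle y]
  obtain ⟨y₀, hy₀⟩ := hV₀
  have hwalk : ∀ {a b : V}, G.Walk a b → w a = c → b ∈ V₀ → ∃ z ∈ V₀, w z = c := by
    intro a b wlk
    induction wlk with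
    | nil => exact fun hx hb => ⟨_, hb, hx⟩
    | @cons a' b' _ hab _ ih =>
      intro hx hb
      by_cases haV : a' ∈ V₀
      · exact ⟨a', haV, hx⟩
      · exact ih (key a' hx haV b' ((G.mem_neighborFinset a' b').mpr hab)) hb
  obtain ⟨wk⟩ := hconn.preconnected x₀ y₀
  obtain ⟨z, hz, hzc⟩ := hwalk wk rfl hy₀
  exact ⟨z, hz, fun x => hzc ▸ hcle x⟩

lemma aux_max_principle {V : Type*} [Fintype V] [DecidableEq V]
    (G : SimpleGraph V) [DecidableRel G.Adj]
    (hcard : 1 < Fintype.card V) (hconn : G.Connected)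
    (V₀ : Finset V) (hV₀ : V₀.Nonempty)
    (p q : ℝ) (hp : 0 < p) (hq : 0 < q) (hpq : p + q = 1)
    (w : V → ℝ)
    (hw : ∀ x ∉ V₀, w x =
      p * (G.neighborFinset x).sup'
            (neighborFinset_nonempty_of_connected G hconn hcard x) w
        + q * (G.neighborFinset x).inf'
            (neighborFinset_nonempty_of_connected G hconn hcard x) w) :
    ∃ z ∈ V₀, ∀ x, w x ≤ w z := by
  have hne : Nonempty V := Fintype.card_pos_iff.mp (by omega)
  obtain ⟨x₀, -, hx₀⟩ := Finset.exists_max_image Finset.univ w Finset.univ_nonempty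
  set c := w x₀ with hc
  have hcle : ∀ y, w y ≤ c := fun y => hx₀ y (Finset.mem_univ y)
  have key : ∀ x, w x = c → x ∉ V₀ → ∀ y ∈ G.neighborFinset x, w y = c := by
    intro x hx hxV y hy
    set ne := neighborFinset_nonempty_of_connected G hconn hcard x
    set S := (G.neighborFinset x).sup' ne w with hS
    set I := (G.neighborFinset x).inf' ne w with hI
    have hSc : S ≤ c := Finset.sup'_le ne w (fun b _ => hcle b)
    have hIc : I ≤ c := le_trans (Finset.inf'_le w hy) (hcle _)
    have hweq : c = p * S + q * I := by rw [← hx]; exact hw x hxV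
    have h1 : q * c ≤ q * I := by
      have h2 := mul_le_mul_of_nonneg_left hSc hp.le
      have h3 : p * c + q * c = c := by rw [← add_mul, hpq, one_mul]
      linarith
    have hIge : c ≤ I := le_of_mul_le_mul_left h1 hq
    have : c ≤ w y := le_trans hIge (Finset.inf'_le w hy)
    linarith [hcle y]
  obtain ⟨y₀, hy₀⟩ := hV₀
  have hwalk : ∀ {a b : V}, G.Walk a b → w a = c → b ∈ V₀ → ∃ z ∈ V₀, w z = c := by
    intro a b wlk
    induction wlk with
    | nil => exact fun hx hb => ⟨_, hb, hx⟩
    | @cons a' b' _ hab _ ih =>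
      intro hx hb
      by_cases haV : a' ∈ V₀
      · exact ⟨a', haV, hx⟩
      · exact ih (key a' hx haV b' ((G.mem_neighborFinset a' b').mpr hab)) hb
  obtain ⟨wk⟩ := hconn.preconnected x₀ y₀
  obtain ⟨z, hz, hzc⟩ := hwalk wk rfl hy₀
  exact ⟨z, hz, fun x => hzc ▸ hcle x⟩

/-- if `(u_n)` is the iteration started from below (`u₀ = g` on `V₀`,
`u₀ = m` off `V₀`) and `(v_n)` the iteration started from above (`v₀ = g` on `V₀`,
`v₀ = M` off `V₀`), both updated by
`w_{n+1}(x) = p ⬝ max_{y∼x} w_n(y) + q ⬝ min_{y∼x} w_n(y)` off `V₀` and `= g` on `V₀`,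
then any solution `w` of the `r`-biased infinity Laplacian boundary problem satisfies
`u_n(x) ≤ w(x) ≤ v_n(x)` for every `n` and every `x`. -/
theorem stmt_18 {V : Type*} [Fintype V] [DecidableEq V]
    (G : SimpleGraph V) [DecidableRel G.Adj]
    (hcard : 1 < Fintype.card V) (hconn : G.Connected)
    (V₀ : Finset V) (hV₀ : V₀.Nonempty) (g : V → ℝ)
    (p q : ℝ) (hp : p ∈ Set.Ioo (0 : ℝ) 1) (hq : q = 1 - p)
    (m M : ℝ) (hm : m = V₀.inf' hV₀ g) (hM : M = V₀.sup' hV₀ g)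
    (u v : ℕ → V → ℝ)
    (hu0 : ∀ x, u 0 x = if x ∈ V₀ then g x else m)
    (hv0 : ∀ x, v 0 x = if x ∈ V₀ then g x else M)
    (hustep : ∀ n x, u (n + 1) x = if x ∈ V₀ then g x else
      p * (G.neighborFinset x).sup'
            (neighborFinset_nonempty_of_connected G hconn hcard x) (u n)
        + q * (G.neighborFinset x).inf'
            (neighborFinset_nonempty_of_connected G hconn hcard x) (u n))
    (hvstep : ∀ n x, v (n + 1) x = if x ∈ V₀ then g x else
      p * (G.neighborFinset x).sup'
            (neighborFinset_nonempty_of_connected G hconn hcard x) (v n)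
        + q * (G.neighborFinset x).inf'
            (neighborFinset_nonempty_of_connected G hconn hcard x) (v n))
    (w : V → ℝ)
    (hw₀ : ∀ x ∈ V₀, w x = g x)
    (hw : ∀ x ∉ V₀, w x =
      p * (G.neighborFinset x).sup'
            (neighborFinset_nonempty_of_connected G hconn hcard x) w
        + q * (G.neighborFinset x).inf'
            (neighborFinset_nonempty_of_connected G hconn hcard x) w) :
    ∀ n x, u n x ≤ w x ∧ w x ≤ v n x := by
  obtain ⟨hp0, hp1⟩ := hp
  have hq0 : 0 < q := by rw [hq]; linarith
  have hpq : p + q = 1 := by rw [hq]; ring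
  obtain ⟨zmin, hzmin, hzminle⟩ :=
    aux_min_principle G hcard hconn V₀ hV₀ p q hp0 hq0 hpq w hw
  obtain ⟨zmax, hzmax, hzmaxle⟩ :=
    aux_max_principle G hcard hconn V₀ hV₀ p q hp0 hq0 hpq w hw
  have hml : ∀ x, m ≤ w x := by
    intro x
    calc m = V₀.inf' hV₀ g := hm
    _ ≤ g zmin := Finset.inf'_le g hzmin
    _ = w zmin := (hw₀ zmin hzmin).symm
    _ ≤ w x := hzminle x
  have hMu : ∀ x, w x ≤ M := by
    intro x
    calc w x ≤ w zmax := hzmaxle x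
    _ = g zmax := hw₀ zmax hzmax
    _ ≤ V₀.sup' hV₀ g := Finset.le_sup' g hzmax
    _ = M := hM.symm
  intro n
  induction n with
  | zero =>
    intro x
    rw [hu0, hv0]
    by_cases hx : x ∈ V₀
    · rw [if_pos hx, if_pos hx, hw₀ x hx]
      exact ⟨le_refl _, le_refl _⟩
    · rw [if_neg hx, if_neg hx]
      exact ⟨hml x, hMu x⟩
  | succ n ih =>
    intro x
    rw [hustep, hvstep]
    by_cases hx : x ∈ V₀
    · rw [if_pos hx, if_pos hx, hw₀ x hx]
      exact ⟨le_refl _, le_refl _⟩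
    · rw [if_neg hx, if_neg hx, hw x hx]
      set ne := neighborFinset_nonempty_of_connected G hconn hcard x
      constructor
      · exact add_le_add
          (mul_le_mul_of_nonneg_left
            (Finset.sup'_mono_fun (fun b _ => (ih b).1)) hp0.le)
          (mul_le_mul_of_nonneg_left
            (Finset.le_inf' ne _ (fun b hb => le_trans (Finset.inf'_le _ hb) ((ih b).1))) hq0.le)
      · exact add_le_add
          (mul_le_mul_of_nonneg_left
            (Finset.sup'_mono_fun (fun b _ => (ih b).2)) hp0.le)
          (mul_le_mul_of_nonneg_left
            (Finset.le_inf' ne _ (fun b hb => le_trans (Finset.inf'_le _ hb) ((ih b).2))) hq0.le)
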